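/- For a positive integer N, the lattice ℤ² has a geometrically similar sublattice of index N if and only if N = a² + b² for some integers a, b. (Sufficiency is realized by multiplication of ℤ² ≅ ℤ[i] by the Gaussian integer ξ = a + bi.) -/

import Mathlib

/-- The integer lattice `ℤ^L` inside `EuclideanSpace ℝ (Fin L)`. -/
noncomputable def Zlat (L : ℕ) : AddSubgroup (EuclideanSpace ℝ (Fin L)) :=
  AddSubgroup.closure (Set.range fun i => EuclideanSpace.single i (1 : ℝ))

/-- `Λ'` is a geometrically similar sublattice of `Λ` of index `N`:
`Λ' = {c·O(v) : v ∈ Λ}` for some `c > 0` and orthogonal matrix `O`, with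
`[Λ : Λ'] = N`. -/
noncomputable def IsSimilarSublattice {L : ℕ}
    (Λ Λ' : AddSubgroup (EuclideanSpace ℝ (Fin L))) (N : ℕ) : Prop :=
  Λ' ≤ Λ ∧ (Λ'.addSubgroupOf Λ).index = N ∧
    ∃ (c : ℝ) (O : Matrix (Fin L) (Fin L) ℝ), 0 < c ∧ O * O.transpose = 1 ∧
      Λ' = AddSubgroup.map (c • Matrix.toEuclideanLin O).toAddMonoidHom Λ

namespace Stmt8Aux

local notation "ℤi" => GaussianInt

def zEquiv : ℤi ≃ₗ[ℤ] (Fin 2 → ℤ) where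
  toFun z := ![z.re, z.im]
  invFun f := ⟨f 0, f 1⟩
  map_add' x y := by funext i; fin_cases i <;> simp
  map_smul' n x := by funext i; fin_cases i <;> simp
  left_inv z := by simp
  right_inv f := by funext i; fin_cases i <;> simp

noncomputable def zBasis : Module.Basis (Fin 2) ℤ ℤi := Module.Basis.ofEquivFun zEquiv

instance : Module.Free ℤ ℤi := Module.Free.of_basis zBasis
instance : Module.Finite ℤ ℤi := Module.Finite.of_basis zBasis

lemma norm_eq (ξ : ℤi) : Algebra.norm ℤ ξ = ξ.re ^ 2 + ξ.im ^ 2 := by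
  classical
  rw [Algebra.norm_eq_matrix_det zBasis, Matrix.det_fin_two]
  simp only [Algebra.leftMulMatrix_eq_repr_mul]
  simp [zBasis, Module.Basis.ofEquivFun, zEquiv, Zsqrtd.re_mul, Zsqrtd.im_mul]
  ring

lemma index_span (ξ : ℤi) :
    ((Ideal.span {ξ}).toAddSubgroup).index = (ξ.re ^ 2 + ξ.im ^ 2).natAbs := by
  have h1 : ((Ideal.span {ξ}).toAddSubgroup).index = Submodule.cardQuot (Ideal.span {ξ}) := rfl
  rw [h1, ← Ideal.absNorm_apply, Ideal.absNorm_span_singleton, norm_eq]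

/-- the imaginary unit -/
def ω : ℤi := ⟨0, 1⟩

lemma mul_omega (ξ : ℤi) : ξ * ω = ⟨-ξ.im, ξ.re⟩ := by
  rw [Zsqrtd.ext_iff]
  constructor <;> simp [ω, Zsqrtd.re_mul, Zsqrtd.im_mul]

lemma top_closure : (⊤ : AddSubgroup ℤi) = AddSubgroup.closure {1, ω} := by
  refine le_antisymm (fun z _ => ?_) le_top
  have hz : z = z.re • (1 : ℤi) + z.im • ω := by
    rw [Zsqrtd.ext_iff]
    constructor <;> simp [ω, zsmul_eq_mul, Zsqrtd.re_mul, Zsqrtd.im_mul]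
  rw [hz]
  exact add_mem (zsmul_mem (AddSubgroup.subset_closure (by simp)) _)
    (zsmul_mem (AddSubgroup.subset_closure (by simp)) _)

lemma span_closure (ξ : ℤi) :
    (Ideal.span {ξ}).toAddSubgroup = AddSubgroup.closure {ξ, ξ * ω} := by
  refine le_antisymm (fun x hx => ?_) ?_
  · rw [Submodule.mem_toAddSubgroup, Ideal.mem_span_singleton] at hx
    obtain ⟨y, rfl⟩ := hx
    have hy : ξ * y = y.re • ξ + y.im • (ξ * ω) := by
      simp only [zsmul_eq_mul]
      rw [Zsqrtd.ext_iff]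
      constructor <;>
        simp [ω, Zsqrtd.re_mul, Zsqrtd.im_mul] <;> ring
    rw [hy]
    exact add_mem (zsmul_mem (AddSubgroup.subset_closure (by simp)) _)
      (zsmul_mem (AddSubgroup.subset_closure (by simp)) _)
  · rw [AddSubgroup.closure_le]
    rintro x (rfl | rfl) <;>
      simp [Submodule.mem_toAddSubgroup, Ideal.mem_span_singleton, Dvd.intro]

noncomputable def E (i : Fin 2) : EuclideanSpace ℝ (Fin 2) := EuclideanSpace.single i 1

noncomputable def phi : ℤi →+ EuclideanSpace ℝ (Fin 2) where
  toFun z := (z.re : ℝ) • E 0 + (z.im : ℝ) • E 1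
  map_zero' := by simp
  map_add' x y := by
    simp only [Zsqrtd.re_add, Zsqrtd.im_add, Int.cast_add, add_smul]
    abel

lemma phi_apply (z : ℤi) : phi z = (z.re : ℝ) • E 0 + (z.im : ℝ) • E 1 := rfl

lemma E_apply (i j : Fin 2) : E i j = if j = i then 1 else 0 := by
  simp [E, EuclideanSpace.single_apply]

lemma phi_coord0 (z : ℤi) : phi z 0 = (z.re : ℝ) := by
  show ((z.re : ℝ) • E 0 + (z.im : ℝ) • E 1) 0 = _
  have : ((z.re : ℝ) • E 0 + (z.im : ℝ) • E 1) 0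
      = (z.re : ℝ) * E 0 0 + (z.im : ℝ) * E 1 0 := rfl
  rw [this, E_apply, E_apply]
  norm_num

lemma phi_coord1 (z : ℤi) : phi z 1 = (z.im : ℝ) := by
  have : phi z 1 = (z.re : ℝ) * E 0 1 + (z.im : ℝ) * E 1 1 := rfl
  rw [this, E_apply, E_apply]
  norm_num

lemma phi_inj : Function.Injective phi := by
  intro x y h
  rw [Zsqrtd.ext_iff]
  have h0 := congrArg (fun f : EuclideanSpace ℝ (Fin 2) => f 0) h
  have h1 := congrArg (fun f : EuclideanSpace ℝ (Fin 2) => f 1) h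
  simp only [phi_coord0, phi_coord1] at h0 h1
  exact ⟨by exact_mod_cast h0, by exact_mod_cast h1⟩

lemma range_singles :
    (Set.range fun i : Fin 2 => EuclideanSpace.single i (1 : ℝ)) = {E 0, E 1} := by
  ext x
  constructor
  · rintro ⟨i, rfl⟩
    fin_cases i <;> simp [E]
  · rintro (rfl | rfl)
    exacts [⟨0, rfl⟩, ⟨1, rfl⟩]

lemma phi_one : phi 1 = E 0 := by
  rw [phi_apply]
  simp

lemma phi_omega : phi ω = E 1 := by
  rw [phi_apply]
  simp [ω]

lemma phi_range : AddSubgroup.map phi ⊤ = Zlat 2 := by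
  rw [top_closure, AddMonoidHom.map_closure, Zlat, range_singles, Set.image_pair,
    phi_one, phi_omega]

noncomputable def phi' : ℤi →+ ↥(Zlat 2) :=
  phi.codRestrict _ (fun z => by
    rw [← phi_range]; exact ⟨z, trivial, rfl⟩)

lemma phi'_coe (z : ℤi) : (phi' z : EuclideanSpace ℝ (Fin 2)) = phi z := rfl

noncomputable def eqv : ℤi ≃+ ↥(Zlat 2) :=
  AddEquiv.ofBijective phi' ⟨fun x y h => phi_inj (by rw [← phi'_coe, ← phi'_coe, h]),
    fun x => by
      have hx : (x : EuclideanSpace ℝ (Fin 2)) ∈ AddSubgroup.map phi ⊤ := by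
        rw [phi_range]; exact x.2
      obtain ⟨z, -, hz⟩ := hx
      exact ⟨z, Subtype.ext hz⟩⟩

lemma transfer (S : AddSubgroup ℤi) :
    ((AddSubgroup.map phi S).addSubgroupOf (Zlat 2)).index = S.index := by
  have heq : (AddSubgroup.map phi S).addSubgroupOf (Zlat 2) = AddSubgroup.map (eqv : ℤi ≃+ ↥(Zlat 2)) S := by
    ext x
    simp only [AddSubgroup.mem_addSubgroupOf, AddSubgroup.mem_map]
    constructor
    · rintro ⟨s, hs, hsx⟩
      exact ⟨s, hs, Subtype.ext hsx⟩
    · rintro ⟨s, hs, rfl⟩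
      exact ⟨s, hs, rfl⟩
  rw [heq, AddSubgroup.map_equiv_eq_comap_symm,
    AddSubgroup.index_comap_of_surjective S eqv.symm.surjective]

noncomputable def Lam (ξ : ℤi) : AddSubgroup (EuclideanSpace ℝ (Fin 2)) :=
  AddSubgroup.map phi (Ideal.span {ξ}).toAddSubgroup

lemma Lam_le (ξ : ℤi) : Lam ξ ≤ Zlat 2 := by
  rw [← phi_range]
  exact AddSubgroup.map_mono le_top

lemma Lam_index (ξ : ℤi) :
    ((Lam ξ).addSubgroupOf (Zlat 2)).index = (ξ.re ^ 2 + ξ.im ^ 2).natAbs := by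
  rw [Lam, transfer, index_span]

lemma Lam_closure (ξ : ℤi) :
    Lam ξ = AddSubgroup.closure {phi ξ, phi (ξ * ω)} := by
  rw [Lam, span_closure, AddMonoidHom.map_closure, Set.image_pair]

lemma closure_pair_neg {G : Type*} [AddGroup G] (x y : G) :
    AddSubgroup.closure {x, -y} = AddSubgroup.closure {x, y} := by
  refine le_antisymm ?_ ?_ <;> rw [AddSubgroup.closure_le] <;> rintro z (rfl | rfl)
  · exact AddSubgroup.subset_closure (by simp)
  · exact neg_mem (AddSubgroup.subset_closure (by simp))
  · exact AddSubgroup.subset_closure (by simp)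
  · simpa using neg_mem (AddSubgroup.subset_closure (show -z ∈ ({x, -z} : Set G) by simp))

lemma key (a b p q : ℤ) (h0 : a ^ 2 + b ^ 2 ≠ 0) (h1 : a * p + b * q = 0)
    (h2 : a ^ 2 + b ^ 2 = p ^ 2 + q ^ 2) :
    (p = -b ∧ q = a) ∨ (p = b ∧ q = -a) := by
  have hsq : (a * q - b * p - (a ^ 2 + b ^ 2)) * (a * q - b * p + (a ^ 2 + b ^ 2)) = 0 := by
    linear_combination (-(a ^ 2 + b ^ 2)) * h2 - (a * p + b * q) * h1
  rcases mul_eq_zero.mp hsq with h | h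
  · left
    have h : a * q - b * p = a ^ 2 + b ^ 2 := by linarith
    have hq : (a ^ 2 + b ^ 2) * (q - a) = 0 := by linear_combination a * h + b * h1
    have hp : (a ^ 2 + b ^ 2) * (p + b) = 0 := by linear_combination a * h1 - b * h
    constructor
    · have := (mul_eq_zero.mp hp).resolve_left h0; linarith
    · have := (mul_eq_zero.mp hq).resolve_left h0; linarith
  · right
    have h : a * q - b * p = -(a ^ 2 + b ^ 2) := by linarith
    have hq : (a ^ 2 + b ^ 2) * (q + a) = 0 := by linear_combination a * h + b * h1
    have hp : (a ^ 2 + b ^ 2) * (p - b) = 0 := by linear_combination a * h1 - b * h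
    constructor
    · have := (mul_eq_zero.mp hp).resolve_left h0; linarith
    · have := (mul_eq_zero.mp hq).resolve_left h0; linarith

lemma T_single (c : ℝ) (O : Matrix (Fin 2) (Fin 2) ℝ) (i j : Fin 2) :
    ((c • Matrix.toEuclideanLin O).toAddMonoidHom (E i)) j = c * O j i := by
  show ((c • Matrix.toEuclideanLin O) (E i)) j = c * O j i
  have h1 : ((c • Matrix.toEuclideanLin O) (E i)) j
      = c * ((Matrix.toEuclideanLin O) (E i)) j := rfl
  rw [h1]
  congr 1
  simp [E, Matrix.toEuclideanLin_apply, Matrix.mulVec_single]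

lemma E_mem (i : Fin 2) : E i ∈ Zlat 2 :=
  AddSubgroup.subset_closure ⟨i, rfl⟩

lemma Zlat_eq : Zlat 2 = AddSubgroup.closure {E 0, E 1} := by
  rw [Zlat, range_singles]

end Stmt8Aux

open Stmt8Aux in
set_option maxHeartbeats 2000000 in
theorem stmt8 (N : ℕ) (hN : 0 < N) :
    (∃ Λ' : AddSubgroup (EuclideanSpace ℝ (Fin 2)), IsSimilarSublattice (Zlat 2) Λ' N) ↔
      ∃ a b : ℤ, (N : ℤ) = a ^ 2 + b ^ 2 := by
  constructor
  · rintro ⟨Λ', hle, hidx, c, O, hc, hOOt, hmap⟩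
    set T := (c • Matrix.toEuclideanLin O).toAddMonoidHom with hT
    have hOtO : O.transpose * O = 1 := mul_eq_one_comm.mp hOOt
    rw [← Matrix.ext_iff] at hOtO
    have h00 := hOtO 0 0
    have h01 := hOtO 0 1
    have h11 := hOtO 1 1
    simp [Matrix.mul_apply, Fin.sum_univ_two, Matrix.one_apply] at h00 h01 h11
    -- the two columns of c • O
    have hu : T (E 0) ∈ Zlat 2 := hle (hmap ▸ ⟨E 0, E_mem 0, rfl⟩)
    have hv : T (E 1) ∈ Zlat 2 := hle (hmap ▸ ⟨E 1, E_mem 1, rfl⟩)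
    rw [← phi_range] at hu hv
    obtain ⟨za, -, hza⟩ := hu
    obtain ⟨zb, -, hzb⟩ := hv
    set a := za.re; set b := za.im; set p := zb.re; set q := zb.im
    have ha : (a : ℝ) = c * O 0 0 := by rw [← phi_coord0 za, hza, T_single]
    have hb : (b : ℝ) = c * O 1 0 := by rw [← phi_coord1 za, hza, T_single]
    have hp : (p : ℝ) = c * O 0 1 := by rw [← phi_coord0 zb, hzb, T_single]
    have hq : (q : ℝ) = c * O 1 1 := by rw [← phi_coord1 zb, hzb, T_single]
    have hR1 : (a : ℝ) ^ 2 + (b : ℝ) ^ 2 = c ^ 2 := by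
      rw [ha, hb]; linear_combination c ^ 2 * h00
    have hR2 : (p : ℝ) ^ 2 + (q : ℝ) ^ 2 = c ^ 2 := by
      rw [hp, hq]; linear_combination c ^ 2 * h11
    have hR3 : (a : ℝ) * p + (b : ℝ) * q = 0 := by
      rw [ha, hb, hp, hq]; linear_combination c ^ 2 * h01
    have h2 : a ^ 2 + b ^ 2 = p ^ 2 + q ^ 2 := by
      have := hR1.trans hR2.symm; exact_mod_cast this
    have h1 : a * p + b * q = 0 := by exact_mod_cast hR3
    have h0 : a ^ 2 + b ^ 2 ≠ 0 := by
      intro h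
      have : ((a ^ 2 + b ^ 2 : ℤ) : ℝ) = c ^ 2 := by push_cast; exact hR1
      rw [h] at this
      simp at this
      nlinarith
    have hzb' : zb = za * ω ∨ zb = -(za * ω) := by
      rcases key a b p q h0 h1 h2 with ⟨hp', hq'⟩ | ⟨hp', hq'⟩
      · left; rw [mul_omega, Zsqrtd.ext_iff]; exact ⟨hp', hq'⟩
      · right
        rw [mul_omega, Zsqrtd.ext_iff, Zsqrtd.re_neg, Zsqrtd.im_neg, neg_neg]
        exact ⟨hp', hq'⟩
    have hLam : Λ' = Lam za := by
      rw [hmap, Zlat_eq, AddMonoidHom.map_closure, Set.image_pair, ← hza, ← hzb, Lam_closure]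
      rcases hzb' with h | h
      · rw [h]
      · rw [h, map_neg, closure_pair_neg]
    refine ⟨a, b, ?_⟩
    have hnn : 0 ≤ a ^ 2 + b ^ 2 := by positivity
    rw [← hidx, hLam, Lam_index]
    exact Int.natAbs_of_nonneg hnn
  · rintro ⟨a, b, hab⟩
    set ξ : GaussianInt := ⟨a, b⟩ with hξ
    have hNR : (0 : ℝ) < N := by exact_mod_cast hN
    set c : ℝ := Real.sqrt N with hcdef
    have hc : 0 < c := Real.sqrt_pos.mpr hNR
    have hc2 : c ^ 2 = (N : ℝ) := Real.sq_sqrt hNR.le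
    have habR : (a : ℝ) ^ 2 + (b : ℝ) ^ 2 = c ^ 2 := by
      rw [hc2]; exact_mod_cast hab.symm
    set O : Matrix (Fin 2) (Fin 2) ℝ := Matrix.of ![![a / c, -b / c], ![b / c, a / c]] with hO
    refine ⟨Lam ξ, Lam_le ξ, ?_, c, O, hc, ?_, ?_⟩
    · rw [Lam_index]
      have : (ξ.re ^ 2 + ξ.im ^ 2) = (N : ℤ) := by rw [hξ]; exact hab.symm
      rw [this]
      simp
    · have hc0 : c ≠ 0 := ne_of_gt hc
      rw [← Matrix.ext_iff]
      intro i j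
      rw [Matrix.mul_apply, Fin.sum_univ_two]
      fin_cases i <;> fin_cases j <;> simp [hO, Matrix.one_apply] <;> field_simp <;>
        first | linear_combination habR | ring
    · have hc0 : c ≠ 0 := ne_of_gt hc
      have hTE0 : (c • Matrix.toEuclideanLin O).toAddMonoidHom (E 0) = phi ξ := by
        have h0 : ((c • Matrix.toEuclideanLin O).toAddMonoidHom (E 0)) 0 = phi ξ 0 := by
          rw [T_single, phi_coord0]; show c * O 0 0 = (a : ℝ); rw [hO]; simp only [Matrix.of_apply, Matrix.cons_val', Matrix.cons_val_zero, Matrix.cons_val_one, Matrix.empty_val', Matrix.cons_val_fin_one]; field_simp; try ring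
        have h1 : ((c • Matrix.toEuclideanLin O).toAddMonoidHom (E 0)) 1 = phi ξ 1 := by
          rw [T_single, phi_coord1]; show c * O 1 0 = (b : ℝ); rw [hO]; simp only [Matrix.of_apply, Matrix.cons_val', Matrix.cons_val_zero, Matrix.cons_val_one, Matrix.empty_val', Matrix.cons_val_fin_one]; field_simp; try ring
        exact PiLp.ext fun j => by fin_cases j; exacts [h0, h1]
      have hTE1 : (c • Matrix.toEuclideanLin O).toAddMonoidHom (E 1) = phi (ξ * ω) := by
        have h0 : ((c • Matrix.toEuclideanLin O).toAddMonoidHom (E 1)) 0 = phi (ξ * ω) 0 := by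
          rw [T_single, phi_coord0, mul_omega]
          show c * O 0 1 = ((-b : ℤ) : ℝ); rw [hO]; push_cast; simp only [Matrix.of_apply, Matrix.cons_val', Matrix.cons_val_zero, Matrix.cons_val_one, Matrix.empty_val', Matrix.cons_val_fin_one]; field_simp; try ring
        have h1 : ((c • Matrix.toEuclideanLin O).toAddMonoidHom (E 1)) 1 = phi (ξ * ω) 1 := by
          rw [T_single, phi_coord1, mul_omega]
          show c * O 1 1 = (a : ℝ); rw [hO]; simp only [Matrix.of_apply, Matrix.cons_val', Matrix.cons_val_zero, Matrix.cons_val_one, Matrix.empty_val', Matrix.cons_val_fin_one]; field_simp; try ring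
        exact PiLp.ext fun j => by fin_cases j; exacts [h0, h1]
      rw [Lam_closure, Zlat_eq, AddMonoidHom.map_closure, Set.image_pair, hTE0, hTE1]
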